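/- For every closed convex set K ⊆ ℝⁿ and every vector u ∈ ℝⁿ, one has the inclusions K∘u ⊆ K*u ⊆ (K − u) ∪ (K + u). -/

import Mathlib

open MeasureTheory Set
open scoped Pointwise RealInnerProductSpace ENNReal Classical

/-- The standard Gaussian measure on `ℝ^d`, with density `(2π)^(-d/2) exp(-‖x‖²/2)`
with respect to Lebesgue measure. -/
noncomputable def gaussD (d : ℕ) : Measure (EuclideanSpace ℝ (Fin d)) :=
  volume.withDensity fun x =>
    ENNReal.ofReal ((2 * Real.pi) ^ (-(d : ℝ) / 2) * Real.exp (-‖x‖ ^ 2 / 2))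

/-- The standard Gaussian measure on `ℝ`. -/
noncomputable def gauss1 : Measure ℝ :=
  volume.withDensity fun t =>
    ENNReal.ofReal ((2 * Real.pi) ^ (-(1 : ℝ) / 2) * Real.exp (-t ^ 2 / 2))

/-- The slice `(K - y) ∩ ℝu`, viewed as a subset of `ℝ` via the isometry
`t ↦ t • (u / ‖u‖)`. -/
def lineSlice {n : ℕ} (K : Set (EuclideanSpace ℝ (Fin n)))
    (u y : EuclideanSpace ℝ (Fin n)) : Set ℝ :=
  {t : ℝ | y + t • (‖u‖⁻¹ • u) ∈ K}

/-- `Z_B(K, u)`: the set of `y ∈ u^⊥` such that `(K - y) ∩ ℝu` has Euclidean length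
at least `2‖u‖`. -/
noncomputable def ZB {n : ℕ} (K : Set (EuclideanSpace ℝ (Fin n)))
    (u : EuclideanSpace ℝ (Fin n)) : Set (EuclideanSpace ℝ (Fin n)) :=
  {y | ⟪y, u⟫ = 0 ∧ ENNReal.ofReal (2 * ‖u‖) ≤ volume (lineSlice K u y)}

/-- Banaszczyk's transform `K * u = (K + [-u, u]) ∩ (Z_B + ℝu)`, with `K * 0 = K`. -/
noncomputable def bTransform {n : ℕ} (K : Set (EuclideanSpace ℝ (Fin n)))
    (u : EuclideanSpace ℝ (Fin n)) : Set (EuclideanSpace ℝ (Fin n)) :=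
  if u = 0 then K
  else (K + segment ℝ (-u) u) ∩ (ZB K u + Set.range fun t : ℝ => t • u)

/-- `Z_K(u)`: the set of `y ∈ u^⊥` such that `γ₁((K - y) ∩ ℝu) ≥ γ₁([-‖u‖, ‖u‖])`. -/
noncomputable def ZG {n : ℕ} (K : Set (EuclideanSpace ℝ (Fin n)))
    (u : EuclideanSpace ℝ (Fin n)) : Set (EuclideanSpace ℝ (Fin n)) :=
  {y | ⟪y, u⟫ = 0 ∧ gauss1 (Set.Icc (-‖u‖) ‖u‖) ≤ gauss1 (lineSlice K u y)}

/-- The Gaussian Banaszczyk transform `K ∘ u = (K + [-u, u]) ∩ (Z_K(u) + ℝu)`,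
with `K ∘ 0 = K`. -/
noncomputable def gTransform {n : ℕ} (K : Set (EuclideanSpace ℝ (Fin n)))
    (u : EuclideanSpace ℝ (Fin n)) : Set (EuclideanSpace ℝ (Fin n)) :=
  if u = 0 then K
  else (K + segment ℝ (-u) u) ∩ (ZG K u + Set.range fun t : ℝ => t • u)

lemma gauss1_apply {S : Set ℝ} (hS : MeasurableSet S) :
    gauss1 S = ∫⁻ t in S,
      ENNReal.ofReal ((2 * Real.pi) ^ (-(1:ℝ)/2) * Real.exp (-t^2/2)) := by
  rw [gauss1, withDensity_apply _ hS]

lemma meas_dens : Measurable fun t : ℝ =>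
    ENNReal.ofReal ((2 * Real.pi) ^ (-(1:ℝ)/2) * Real.exp (-t^2/2)) := by
  fun_prop

lemma gauss1_le_of_forall {S : Set ℝ} (hS : MeasurableSet S) {c : ℝ}
    (h : ∀ t ∈ S, Real.exp (-t^2/2) ≤ c) :
    gauss1 S ≤ ENNReal.ofReal ((2 * Real.pi) ^ (-(1:ℝ)/2) * c) * volume S := by
  have hC0 : (0:ℝ) ≤ (2 * Real.pi) ^ (-(1:ℝ)/2) := Real.rpow_nonneg (by positivity) _
  rw [gauss1_apply hS]
  calc ∫⁻ t in S, ENNReal.ofReal ((2 * Real.pi) ^ (-(1:ℝ)/2) * Real.exp (-t^2/2))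
      ≤ ∫⁻ _ in S, ENNReal.ofReal ((2 * Real.pi) ^ (-(1:ℝ)/2) * c) :=
        setLIntegral_mono measurable_const fun t ht =>
          ENNReal.ofReal_le_ofReal (mul_le_mul_of_nonneg_left (h t ht) hC0)
    _ = _ := setLIntegral_const S _

lemma le_gauss1_of_forall {S : Set ℝ} (hS : MeasurableSet S) {c : ℝ}
    (h : ∀ t ∈ S, c ≤ Real.exp (-t^2/2)) :
    ENNReal.ofReal ((2 * Real.pi) ^ (-(1:ℝ)/2) * c) * volume S ≤ gauss1 S := by
  have hC0 : (0:ℝ) ≤ (2 * Real.pi) ^ (-(1:ℝ)/2) := Real.rpow_nonneg (by positivity) _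
  rw [gauss1_apply hS]
  calc ENNReal.ofReal ((2 * Real.pi) ^ (-(1:ℝ)/2) * c) * volume S
      = ∫⁻ _ in S, ENNReal.ofReal ((2 * Real.pi) ^ (-(1:ℝ)/2) * c) :=
        (setLIntegral_const S _).symm
    _ ≤ _ := setLIntegral_mono meas_dens fun t ht =>
          ENNReal.ofReal_le_ofReal (mul_le_mul_of_nonneg_left (h t ht) hC0)

lemma key {S : Set ℝ} (hS : MeasurableSet S) {r : ℝ} (hr : 0 < r)
    (h : gauss1 (Icc (-r) r) ≤ gauss1 S) : ENNReal.ofReal (2 * r) ≤ volume S := by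
  by_contra hc
  push_neg at hc
  have hC0 : (0:ℝ) < (2 * Real.pi) ^ (-(1:ℝ)/2) := Real.rpow_pos_of_pos (by positivity) _
  have hfin : volume S ≠ ⊤ := (hc.trans ENNReal.ofReal_lt_top).ne
  set m : ℝ := (volume S).toReal / 2 with hm
  have hm0 : 0 ≤ m := by positivity
  have hmr : m < r := by
    have h2 := (ENNReal.toReal_lt_toReal hfin ENNReal.ofReal_ne_top).2 hc
    rw [ENNReal.toReal_ofReal (by positivity)] at h2
    rw [hm]; linarith
  set I : Set ℝ := Icc (-m) m with hI
  have hImeas : MeasurableSet I := measurableSet_Icc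
  have hvolI : volume I = volume S := by
    rw [hI, Real.volume_Icc]
    have : m - (-m) = (volume S).toReal := by rw [hm]; ring
    rw [this, ENNReal.ofReal_toReal hfin]
  -- pointwise bounds
  have hA : gauss1 (S \ I) ≤
      ENNReal.ofReal ((2 * Real.pi) ^ (-(1:ℝ)/2) * Real.exp (-m^2/2)) * volume (S \ I) := by
    apply gauss1_le_of_forall (hS.diff hImeas)
    intro t ht
    apply Real.exp_le_exp.2
    have : ¬ (-m ≤ t ∧ t ≤ m) := by simpa [hI, Set.mem_Icc] using ht.2
    have h2 : m^2 ≤ t^2 := by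
      rcases not_and_or.1 this with h' | h'
      · push_neg at h'; nlinarith
      · push_neg at h'; nlinarith
    nlinarith
  have hB : ENNReal.ofReal ((2 * Real.pi) ^ (-(1:ℝ)/2) * Real.exp (-m^2/2)) * volume (I \ S)
      ≤ gauss1 (I \ S) := by
    apply le_gauss1_of_forall (hImeas.diff hS)
    intro t ht
    apply Real.exp_le_exp.2
    have h1 : -m ≤ t ∧ t ≤ m := ht.1
    nlinarith [h1.1, h1.2]
  have hAB : volume (S \ I) = volume (I \ S) := by
    have h1 : volume (S ∩ I) + volume (S \ I) = volume S := measure_inter_add_diff S hImeas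
    have h2 : volume (I ∩ S) + volume (I \ S) = volume I := measure_inter_add_diff I hS
    rw [Set.inter_comm I S] at h2
    have hfin' : volume (S ∩ I) ≠ ⊤ := ((measure_mono Set.inter_subset_left).trans_lt
      (lt_top_iff_ne_top.2 hfin)).ne
    have : volume (S ∩ I) + volume (S \ I) = volume (S ∩ I) + volume (I \ S) := by
      rw [h1, h2, hvolI]
    exact (ENNReal.add_right_inj hfin').1 this
  have hSI : gauss1 S ≤ gauss1 I := by
    have e1 : gauss1 (S ∩ I) + gauss1 (S \ I) = gauss1 S := measure_inter_add_diff S hImeas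
    have e2 : gauss1 (I ∩ S) + gauss1 (I \ S) = gauss1 I := measure_inter_add_diff I hS
    rw [Set.inter_comm I S] at e2
    calc gauss1 S = gauss1 (S ∩ I) + gauss1 (S \ I) := e1.symm
      _ ≤ gauss1 (S ∩ I) + ENNReal.ofReal ((2 * Real.pi) ^ (-(1:ℝ)/2) * Real.exp (-m^2/2))
            * volume (S \ I) := add_le_add le_rfl hA
      _ = gauss1 (S ∩ I) + ENNReal.ofReal ((2 * Real.pi) ^ (-(1:ℝ)/2) * Real.exp (-m^2/2))
            * volume (I \ S) := by rw [hAB]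
      _ ≤ gauss1 (S ∩ I) + gauss1 (I \ S) := add_le_add le_rfl hB
      _ = gauss1 I := e2
  have hIfin : gauss1 I ≠ ⊤ := by
    have := gauss1_le_of_forall hImeas (c := 1) (fun t _ => Real.exp_le_one_iff.2 (by nlinarith))
    refine (this.trans_lt ?_).ne
    apply ENNReal.mul_lt_top ENNReal.ofReal_lt_top
    rw [hvolI]; exact lt_top_iff_ne_top.2 hfin
  have hpos : 0 < gauss1 (Ioc m r) := by
    have hlb := le_gauss1_of_forall (S := Ioc m r) measurableSet_Ioc
      (c := Real.exp (-r^2/2)) (fun t ht => Real.exp_le_exp.2 (by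
        have h1 : m < t := ht.1
        have h2 : t ≤ r := ht.2
        nlinarith))
    refine lt_of_lt_of_le ?_ hlb
    rw [Real.volume_Ioc]
    apply ENNReal.mul_pos
    · exact (ENNReal.ofReal_pos.2 (by positivity)).ne'
    · exact (ENNReal.ofReal_pos.2 (by linarith)).ne'
  have hlt : gauss1 I < gauss1 (Icc (-r) r) := by
    have hdisj : Disjoint I (Ioc m r) := by
      rw [Set.disjoint_left]; intro t ht ht'
      exact absurd ht.2 (not_le.2 ht'.1)
    have hsub : I ∪ Ioc m r ⊆ Icc (-r) r := by
      rintro t (ht | ht)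
      · exact ⟨by linarith [ht.1], by linarith [ht.2]⟩
      · exact ⟨by linarith [ht.1], ht.2⟩
    calc gauss1 I < gauss1 I + gauss1 (Ioc m r) := ENNReal.lt_add_right hIfin hpos.ne'
      _ = gauss1 (I ∪ Ioc m r) := (measure_union hdisj measurableSet_Ioc).symm
      _ ≤ gauss1 (Icc (-r) r) := measure_mono hsub
  exact absurd (h.trans hSI) (not_le.2 hlt)

lemma interval_lemma {J : Set ℝ} (hJc : IsClosed J) (hJconv : Convex ℝ J)
    {r τ τ' : ℝ} (hr : 0 < r) (hτ' : τ' ∈ J) (hd : |τ - τ'| ≤ r)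
    (hvol : ENNReal.ofReal (2 * r) ≤ volume J) : τ + r ∈ J ∨ τ - r ∈ J := by
  have hoc : J.OrdConnected := hJconv.ordConnected
  obtain ⟨hd1, hd2⟩ := abs_le.1 hd
  have hlo : τ - r ≤ τ' := by linarith
  have hhi : τ' ≤ τ + r := by linarith
  by_cases hba : BddAbove J
  · by_cases hbb : BddBelow J
    · have hne : J.Nonempty := ⟨τ', hτ'⟩
      have haJ : sInf J ∈ J := hJc.csInf_mem hne hbb
      have hbJ : sSup J ∈ J := hJc.csSup_mem hne hba
      have hJeq : J = Icc (sInf J) (sSup J) := by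
        apply Subset.antisymm
        · intro z hz; exact ⟨csInf_le hbb hz, le_csSup hba hz⟩
        · exact hoc.out haJ hbJ
      have h1 : sInf J ≤ τ' := csInf_le hbb hτ'
      have h2 : τ' ≤ sSup J := le_csSup hba hτ'
      have hlen : 2 * r ≤ sSup J - sInf J := by
        rw [hJeq, Real.volume_Icc] at hvol
        exact (ENNReal.ofReal_le_ofReal_iff (by linarith)).1 hvol
      by_cases hcase : τ + r ≤ sSup J
      · left; rw [hJeq]; exact ⟨by linarith, hcase⟩
      · right; rw [hJeq]
        push_neg at hcase
        exact ⟨by linarith, by linarith⟩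
    · right
      obtain ⟨z, hz, hz'⟩ := (not_bddBelow_iff.1 hbb) (τ - r)
      exact hoc.out hz hτ' ⟨le_of_lt hz', hlo⟩
  · left
    obtain ⟨z, hz, hz'⟩ := (not_bddAbove_iff.1 hba) (τ + r)
    exact hoc.out hτ' hz ⟨hhi, le_of_lt hz'⟩

/-- For every closed convex `K ⊆ ℝⁿ` and every `u ∈ ℝⁿ`,
`K ∘ u ⊆ K * u ⊆ (K - u) ∪ (K + u)`. -/

theorem gTransform_subset_bTransform_subset_union {n : ℕ}
    (K : Set (EuclideanSpace ℝ (Fin n))) (hKcl : IsClosed K) (hKconv : Convex ℝ K)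
    (u : EuclideanSpace ℝ (Fin n)) :
    gTransform K u ⊆ bTransform K u ∧
      bTransform K u ⊆ ((fun x => x - u) '' K) ∪ ((fun x => x + u) '' K) := by
  constructor
  · by_cases hu : u = 0
    · rw [gTransform, bTransform, if_pos hu, if_pos hu]
    · rw [gTransform, bTransform, if_neg hu, if_neg hu]
      apply Set.inter_subset_inter_right
      apply Set.add_subset_add_right
      intro y hy
      refine ⟨hy.1, ?_⟩
      have hmeas : MeasurableSet (lineSlice K u y) := by
        have : lineSlice K u y = (fun t : ℝ => y + t • (‖u‖⁻¹ • u)) ⁻¹' K := rfl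
        rw [this]
        exact (hKcl.preimage (continuous_const.add
          (continuous_id.smul continuous_const))).measurableSet
      exact key hmeas (norm_pos_iff.2 hu) hy.2
  · by_cases hu : u = 0
    · rw [bTransform, if_pos hu]
      intro x hx
      exact Or.inl ⟨x, hx, by simp [hu]⟩
    · rw [bTransform, if_neg hu]
      rintro x ⟨hx1, hx2⟩
      rw [Set.mem_add] at hx2
      obtain ⟨y, hy, w, ⟨t, rfl⟩, hyw⟩ := hx2
      rw [Set.mem_add] at hx1
      obtain ⟨k, hk, s, hs, hks⟩ := hx1
      obtain ⟨a, b, ha, hb, hab, rfl⟩ := hs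
      simp only at hyw
      have hnu : (‖u‖ : ℝ) ≠ 0 := norm_ne_zero_iff.2 hu
      have hr : 0 < ‖u‖ := norm_pos_iff.2 hu
      have hcabs : |b - a| ≤ 1 := abs_le.2 ⟨by linarith, by linarith⟩
      have hxk : k = y + t • u - (a • (-u) + b • u) := by
        rw [hyw, ← hks]; abel
      have hJc : IsClosed (lineSlice K u y) := by
        have : lineSlice K u y = (fun s : ℝ => y + s • (‖u‖⁻¹ • u)) ⁻¹' K := rfl
        rw [this]
        exact hKcl.preimage (continuous_const.add (continuous_id.smul continuous_const))
      have hJconv : Convex ℝ (lineSlice K u y) := by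
        have hJeq : lineSlice K u y
            = (AffineMap.lineMap y (y + ‖u‖⁻¹ • u) : ℝ →ᵃ[ℝ] _) ⁻¹' K := by
          ext s
          show y + s • (‖u‖⁻¹ • u) ∈ K ↔ s • (y + ‖u‖⁻¹ • u - y) + y ∈ K
          rw [add_sub_cancel_left, add_comm]
        rw [hJeq]
        exact hKconv.affine_preimage _
      have hτ'mem : t * ‖u‖ - (b - a) * ‖u‖ ∈ lineSlice K u y := by
        show y + (t * ‖u‖ - (b - a) * ‖u‖) • (‖u‖⁻¹ • u) ∈ K
        have heq : y + (t * ‖u‖ - (b - a) * ‖u‖) • (‖u‖⁻¹ • u) = k := by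
          rw [hxk]
          match_scalars <;> field_simp <;> ring
        rw [heq]; exact hk
      have hdist : |t * ‖u‖ - (t * ‖u‖ - (b - a) * ‖u‖)| ≤ ‖u‖ := by
        have h1 : t * ‖u‖ - (t * ‖u‖ - (b - a) * ‖u‖) = (b - a) * ‖u‖ := by ring
        rw [h1, abs_mul, abs_of_pos hr]
        nlinarith
      rcases interval_lemma hJc hJconv hr hτ'mem hdist hy.2 with hmem | hmem
      · left
        refine ⟨y + (t * ‖u‖ + ‖u‖) • (‖u‖⁻¹ • u), hmem, ?_⟩
        show y + (t * ‖u‖ + ‖u‖) • (‖u‖⁻¹ • u) - u = x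
        rw [← hyw]
        match_scalars <;> field_simp <;> ring
      · right
        refine ⟨y + (t * ‖u‖ - ‖u‖) • (‖u‖⁻¹ • u), hmem, ?_⟩
        show y + (t * ‖u‖ - ‖u‖) • (‖u‖⁻¹ • u) + u = x
        rw [← hyw]
        match_scalars <;> field_simp <;> ring
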